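/- Let n_j : ℝ → E (j=1,…,N) be twice differentiable maps with derivatives ṅ_j such that {n_j(t)} is an orthonormal basis of E for every t, and let θ_j : ℝ → ℝ be differentiable. Then H_SA is differentiable and its matrix elements in the instantaneous basis satisfy, for all indices k, m and all t: ⟪n_k(t), H_SA'(t)(n_m(t))⟫ = i (d/dt)[⟪n_k(t), ṅ_m(t)⟫] − ( θ_k'(t) δ_{km} + (θ_m(t) − θ_k(t)) ⟪n_k(t), ṅ_m(t)⟫ ), where δ_{km} is the Kronecker delta. -/

import Mathlib

/-- The rank-one operator `|u⟩⟨v| : z ↦ ⟪v, z⟫ • u`. -/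
noncomputable def ketBra {E : Type*} [NormedAddCommGroup E] [InnerProductSpace ℂ E]
    (u v : E) : E →L[ℂ] E :=
  (innerSL ℂ v).smulRight u

/-- The shortcut (transitionless) Hamiltonian
`H_SA(t) = i Σ_j ( |ṅ_j(t)⟩⟨n_j(t)| + i θ_j(t) |n_j(t)⟩⟨n_j(t)| )`. -/
noncomputable def HSA {E : Type*} [NormedAddCommGroup E] [InnerProductSpace ℂ E]
    {N : ℕ} (n n' : Fin N → ℝ → E) (θ : Fin N → ℝ → ℝ) (t : ℝ) : E →L[ℂ] E :=
  Complex.I • ∑ j : Fin N,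
    (ketBra (n' j t) (n j t) + (Complex.I * (θ j t : ℂ)) • ketBra (n j t) (n j t))

noncomputable def innerRL (E : Type*) [NormedAddCommGroup E] [InnerProductSpace ℂ E] :
    E →L[ℝ] (E →L[ℂ] ℂ) :=
  LinearMap.mkContinuous
    { toFun := fun v => innerSL ℂ v
      map_add' := fun a b => by ext z; simp [inner_add_left]
      map_smul' := fun r v => by
        ext z
        show (inner ℂ (r • v) z : ℂ) = r • (inner ℂ v z : ℂ)
        rw [RCLike.real_smul_eq_coe_smul (K := ℂ), inner_smul_left]
        simp }
    1 (fun v => by simp [innerSL_apply_norm])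

noncomputable def ketBraJ (E : Type*) [NormedAddCommGroup E] [InnerProductSpace ℂ E] :
    E →L[ℝ] (E →L[ℝ] (E →L[ℂ] E)) :=
  (ContinuousLinearMap.restrictScalarsL ℂ E (E →L[ℂ] E) ℝ ℝ).comp
    (((ContinuousLinearMap.smulRightL ℂ E E).restrictScalars ℝ).comp (innerRL E))

lemma ketBra_apply {E : Type*} [NormedAddCommGroup E] [InnerProductSpace ℂ E]
    (u v z : E) : ketBra u v z = (inner ℂ v z : ℂ) • u := rfl

lemma hasDerivAt_ketBra {E : Type*} [NormedAddCommGroup E] [InnerProductSpace ℂ E]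
    {u v : ℝ → E} {u' v' : E} {t : ℝ}
    (hu : HasDerivAt u u' t) (hv : HasDerivAt v v' t) :
    HasDerivAt (fun s => ketBra (u s) (v s)) (ketBra u' (v t) + ketBra (u t) v') t := by
  have hc : HasDerivAt (fun s => ketBraJ E (v s)) (ketBraJ E v') t := by
    generalize ketBraJ E = L
    exact @HasFDerivAt.comp_hasDerivAt ℝ _ E _ _ (E →L[ℝ] (E →L[ℂ] E)) _ _ v v' t L L
      L.hasFDerivAt hv
  have h2 := hc.clm_apply hu
  rw [add_comm]
  exact h2

/-- `H_SA` is differentiable and its matrix elements in the instantaneous basis satisfy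
`⟪n_k, H_SA'(t) n_m⟫ = i d/dt[⟪n_k, ṅ_m⟫] − (θ_k'(t) δ_{km} + (θ_m(t) − θ_k(t)) ⟪n_k, ṅ_m⟫)`. -/
theorem matrix_elements_of_deriv_shortcut_hamiltonian
    {E : Type*} [NormedAddCommGroup E] [InnerProductSpace ℂ E] [FiniteDimensional ℂ E]
    {N : ℕ} (n n' n'' : Fin N → ℝ → E) (θ θ' : Fin N → ℝ → ℝ)
    (hON : ∀ t : ℝ, Orthonormal ℂ (fun j : Fin N => n j t))
    (hspan : ∀ t : ℝ, Submodule.span ℂ (Set.range (fun j : Fin N => n j t)) = ⊤)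
    (hn : ∀ (j : Fin N) (t : ℝ), HasDerivAt (n j) (n' j t) t)
    (hn' : ∀ (j : Fin N) (t : ℝ), HasDerivAt (n' j) (n'' j t) t)
    (hθ : ∀ (j : Fin N) (t : ℝ), HasDerivAt (θ j) (θ' j t) t) :
    ∀ t : ℝ, ∃ D : E →L[ℂ] E, HasDerivAt (HSA n n' θ) D t ∧
      ∀ k m : Fin N,
        (inner ℂ (n k t) (D (n m t)) : ℂ)
          = Complex.I * deriv (fun s => (inner ℂ (n k s) (n' m s) : ℂ)) t
            - (((θ' k t : ℂ)) * (if k = m then 1 else 0)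
              + ((θ m t : ℂ) - (θ k t : ℂ)) * (inner ℂ (n k t) (n' m t) : ℂ)) := by
  intro t
  -- scalar derivative
  have hscal : ∀ j : Fin N, HasDerivAt (fun s => Complex.I * (θ j s : ℂ))
      (Complex.I * (θ' j t : ℂ)) t := by
    intro j
    have h0 : HasDerivAt (fun s => ((θ j s : ℝ) : ℂ)) ((θ' j t : ℝ) : ℂ) t :=
      Complex.ofRealCLM.hasFDerivAt.comp_hasDerivAt t (hθ j t)
    exact h0.const_mul Complex.I
  -- the derivative of each summand
  have hterm : ∀ j : Fin N, HasDerivAt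
      (fun s => ketBra (n' j s) (n j s) + (Complex.I * (θ j s : ℂ)) • ketBra (n j s) (n j s))
      ((ketBra (n'' j t) (n j t) + ketBra (n' j t) (n' j t))
        + ((Complex.I * (θ j t : ℂ)) • (ketBra (n' j t) (n j t) + ketBra (n j t) (n' j t))
           + (Complex.I * (θ' j t : ℂ)) • ketBra (n j t) (n j t))) t := by
    intro j
    exact (hasDerivAt_ketBra (hn' j t) (hn j t)).add
      ((hscal j).smul (hasDerivAt_ketBra (hn j t) (hn j t)))
  have hD : HasDerivAt (HSA n n' θ)
      (Complex.I • ∑ j : Fin N,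
        ((ketBra (n'' j t) (n j t) + ketBra (n' j t) (n' j t))
          + ((Complex.I * (θ j t : ℂ)) • (ketBra (n' j t) (n j t) + ketBra (n j t) (n' j t))
             + (Complex.I * (θ' j t : ℂ)) • ketBra (n j t) (n j t)))) t :=
    (HasDerivAt.fun_sum (fun j _ => hterm j)).const_smul Complex.I
  refine ⟨_, hD, fun k m => ?_⟩
  -- basic inner product facts
  have hδ : ∀ a b : Fin N, (inner ℂ (n a t) (n b t) : ℂ) = if a = b then 1 else 0 :=
    fun a b => orthonormal_iff_ite.mp (hON t) a b
  have hA : ∀ a b : Fin N, (inner ℂ (n' a t) (n b t) : ℂ) = - (inner ℂ (n a t) (n' b t) : ℂ) := by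
    intro a b
    have h1 : HasDerivAt (fun s => (inner ℂ (n a s) (n b s) : ℂ))
        ((inner ℂ (n a t) (n' b t) : ℂ) + (inner ℂ (n' a t) (n b t) : ℂ)) t :=
      (hn a t).inner ℂ (hn b t)
    have h2 : HasDerivAt (fun s => (inner ℂ (n a s) (n b s) : ℂ)) 0 t := by
      have hfun : (fun s => (inner ℂ (n a s) (n b s) : ℂ)) = fun _ => if a = b then 1 else 0 :=
        funext fun s => orthonormal_iff_ite.mp (hON s) a b
      rw [hfun]; exact hasDerivAt_const t _
    have h3 := h1.unique h2
    exact eq_neg_of_add_eq_zero_right h3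
  have hA' : ∀ a b : Fin N, (inner ℂ (n a t) (n' b t) : ℂ) = - (inner ℂ (n' a t) (n b t) : ℂ) := by
    intro a b; rw [hA a b]; ring
  -- Parseval
  have hP : ∑ j : Fin N, (inner ℂ (n' k t) (n j t) : ℂ) * (inner ℂ (n j t) (n' m t) : ℂ)
      = (inner ℂ (n' k t) (n' m t) : ℂ) := by
    simpa using (OrthonormalBasis.mk (hON t) (ge_of_eq (hspan t))).sum_inner_mul_inner
      (n' k t) (n' m t)
  -- the derivative of the matrix element
  have hC : deriv (fun s => (inner ℂ (n k s) (n' m s) : ℂ)) t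
      = (inner ℂ (n k t) (n'' m t) : ℂ) + (inner ℂ (n' k t) (n' m t) : ℂ) :=
    ((hn k t).inner ℂ (hn' m t)).deriv
  -- expand the matrix element
  have expand : (inner ℂ (n k t)
      ((Complex.I • ∑ j : Fin N,
        ((ketBra (n'' j t) (n j t) + ketBra (n' j t) (n' j t))
          + ((Complex.I * (θ j t : ℂ)) • (ketBra (n' j t) (n j t) + ketBra (n j t) (n' j t))
             + (Complex.I * (θ' j t : ℂ)) • ketBra (n j t) (n j t)))) (n m t)) : ℂ)
      = Complex.I * ∑ j : Fin N,
          (((inner ℂ (n j t) (n m t) : ℂ) * (inner ℂ (n k t) (n'' j t) : ℂ)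
              + (inner ℂ (n' j t) (n m t) : ℂ) * (inner ℂ (n k t) (n' j t) : ℂ))
            + ((Complex.I * (θ j t : ℂ)) * ((inner ℂ (n j t) (n m t) : ℂ) * (inner ℂ (n k t) (n' j t) : ℂ)
                  + (inner ℂ (n' j t) (n m t) : ℂ) * (inner ℂ (n k t) (n j t) : ℂ))
               + (Complex.I * (θ' j t : ℂ)) * ((inner ℂ (n j t) (n m t) : ℂ) * (inner ℂ (n k t) (n j t) : ℂ)))) := by
    simp only [ContinuousLinearMap.smul_apply, ContinuousLinearMap.sum_apply,
      ContinuousLinearMap.add_apply, ketBra_apply, ContinuousLinearMap.coe_smul',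
      Pi.smul_apply, inner_smul_right, inner_sum, inner_add_right]
  rw [expand]
  -- split the sum
  rw [Finset.sum_add_distrib, Finset.sum_add_distrib, Finset.sum_add_distrib]
  have S1 : ∑ j : Fin N, (inner ℂ (n j t) (n m t) : ℂ) * (inner ℂ (n k t) (n'' j t) : ℂ)
      = (inner ℂ (n k t) (n'' m t) : ℂ) := by
    simp [hδ, ite_mul]
  have S2 : ∑ j : Fin N, (inner ℂ (n' j t) (n m t) : ℂ) * (inner ℂ (n k t) (n' j t) : ℂ)
      = (inner ℂ (n' k t) (n' m t) : ℂ) := by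
    rw [← hP]
    exact Finset.sum_congr rfl (fun j _ => by rw [hA j m, hA' k j]; ring)
  have S3 : ∑ j : Fin N, (Complex.I * (θ j t : ℂ))
        * ((inner ℂ (n j t) (n m t) : ℂ) * (inner ℂ (n k t) (n' j t) : ℂ)
            + (inner ℂ (n' j t) (n m t) : ℂ) * (inner ℂ (n k t) (n j t) : ℂ))
      = Complex.I * (θ m t : ℂ) * (inner ℂ (n k t) (n' m t) : ℂ)
        + Complex.I * (θ k t : ℂ) * (inner ℂ (n' k t) (n m t) : ℂ) := by
    simp [hδ, mul_ite, ite_mul, mul_add, Finset.sum_add_distrib]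
  have S4 : ∑ j : Fin N, (Complex.I * (θ' j t : ℂ))
        * ((inner ℂ (n j t) (n m t) : ℂ) * (inner ℂ (n k t) (n j t) : ℂ))
      = Complex.I * (θ' k t : ℂ) * (if k = m then 1 else 0) := by
    simp only [hδ, mul_ite, ite_mul, mul_one, mul_zero, one_mul, zero_mul]
    rcases eq_or_ne k m with h | h
    · subst h; simp
    · simp [h, Ne.symm h, fun j => show ¬(j = m ∧ k = j) from fun ⟨h1, h2⟩ => h (h2.trans h1)]
  rw [S1, S2, S3, S4, hC, hA k m]
  ring_nf
  linear_combination (((θ m t : ℂ) - (θ k t : ℂ)) * (inner ℂ (n k t) (n' m t) : ℂ)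
      + (θ' k t : ℂ) * (if k = m then 1 else 0)) * Complex.I_mul_I
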